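/- Let H be a complex Hilbert space, T_1 ≥ T_2 ≥ ⋯ a decreasing sequence of positive linear contractions on H, T the strong operator limit of (T_n), and P the orthogonal projection onto {ξ ∈ H : Tξ = ξ}. Assume ‖T_n − T‖ → 0 and that 1 is isolated in the spectrum of T, i.e., there exists δ ∈ (0, 1) such that the spectrum of T does not intersect the open interval (1−δ, 1). Then for every proper σ : ℕ → ℕ, ‖T_{σ(n)} ⋯ T_{σ(1)} − P‖ → 0 in operator norm. -/

import Mathlib

open Filter Topology
open scoped InnerProductSpace ComplexOrder

section Aux

variable {H : Type*} [NormedAddCommGroup H] [InnerProductSpace ℂ H] [CompleteSpace H]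

lemma pos_of_inner' (S : H →L[ℂ] H) (h : ∀ ξ : H, 0 ≤ ⟪S ξ, ξ⟫_ℂ) : 0 ≤ S := by
  rw [ContinuousLinearMap.nonneg_iff_isPositive, ContinuousLinearMap.isPositive_iff_complex]
  intro x
  obtain ⟨hre, him⟩ := (Complex.le_def).mp (h x)
  simp only [Complex.zero_re, Complex.zero_im] at hre him
  refine ⟨?_, by simpa using hre⟩
  apply Complex.ext
  · simp
  · simpa using him

lemma apply_eq_zero_of_inner_zero' (S : H →L[ℂ] H) (hS : 0 ≤ S) (ξ : H)
    (h : RCLike.re ⟪S ξ, ξ⟫_ℂ = 0) : S ξ = 0 := by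
  obtain ⟨B, hB0, hBS⟩ : ∃ B : H →L[ℂ] H, 0 ≤ B ∧ B * B = S :=
    ⟨CFC.sqrt S, CFC.sqrt_nonneg S, CFC.sqrt_mul_sqrt_self S hS⟩
  have hBsa : IsSelfAdjoint B := IsSelfAdjoint.of_nonneg hB0
  have key : ⟪S ξ, ξ⟫_ℂ = ⟪B ξ, B ξ⟫_ℂ := by
    rw [← hBS, ContinuousLinearMap.mul_apply]
    have h2 := ContinuousLinearMap.adjoint_inner_left B ξ (B ξ)
    rwa [hBsa.adjoint_eq] at h2
  have hB : B ξ = 0 := by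
    rw [key, inner_self_eq_norm_sq] at h
    simpa [pow_eq_zero_iff] using h
  rw [← hBS, ContinuousLinearMap.mul_apply, hB, map_zero]


lemma proj_eq (Tlim P : H →L[ℂ] H) (δ : ℝ) (hδ : 0 < δ) (hδ1 : δ < 1)
    (hTsa : IsSelfAdjoint Tlim)
    (hspec : spectrum ℝ Tlim ⊆ Set.Icc 0 (1 - δ) ∪ {1})
    (hPfix : ∀ η : H, Tlim η = η → P η = η)
    (hPmem : ∀ ξ : H, Tlim (P ξ) = P ξ)
    (hPsa : IsSelfAdjoint P) :
    ‖Tlim - P‖ ≤ 1 - δ := by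
  set f : ℝ → ℝ := fun x => max 0 (min 1 ((x - (1 - δ))/δ)) with hfdef
  have hfc : Continuous f := by fun_prop
  have hcases : ∀ x ∈ spectrum ℝ Tlim, (0 ≤ x ∧ x ≤ 1 - δ ∧ f x = 0) ∨ (x = 1 ∧ f x = 1) := by
    intro x hx
    rcases hspec hx with h | h
    · left
      refine ⟨h.1, h.2, ?_⟩
      have h2 : (x - (1 - δ))/δ ≤ 0 := div_nonpos_of_nonpos_of_nonneg (by linarith [h.2]) hδ.le
      simp only [hfdef]
      rw [max_eq_left]
      exact le_trans (min_le_right _ _) h2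
    · rw [Set.mem_singleton_iff] at h
      subst h
      refine Or.inr ⟨rfl, ?_⟩
      simp only [hfdef]
      rw [show (1:ℝ) - (1 - δ) = δ by ring, div_self hδ.ne']
      norm_num
  set e : H →L[ℂ] H := cfc f Tlim with hedef
  have h_e_sa : IsSelfAdjoint e := cfc_predicate f Tlim
  have h_idem : e * e = e := by
    rw [hedef, ← cfc_mul f f Tlim hfc.continuousOn hfc.continuousOn]
    exact cfc_congr fun x hx => by rcases hcases x hx with ⟨_, _, h⟩ | ⟨_, h⟩ <;> simp [h]
  have h_Te : Tlim * e = e := by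
    conv_lhs => rw [← cfc_id' ℝ Tlim]
    rw [hedef, ← cfc_mul (fun x : ℝ => x) f Tlim (by fun_prop) hfc.continuousOn]
    refine cfc_congr fun x hx => ?_
    rcases hcases x hx with ⟨_, _, h⟩ | ⟨h1, h⟩
    · simp [h]
    · subst h1; simp [h]
  have h_one_sub : (1 : H →L[ℂ] H) - e = cfc (fun x : ℝ => 1 - f x) Tlim := by
    rw [cfc_sub (fun _ : ℝ => (1:ℝ)) f Tlim continuous_const.continuousOn hfc.continuousOn,
      cfc_const (1:ℝ) Tlim, map_one]
  have h_one_sub_nonneg : (0 : H →L[ℂ] H) ≤ 1 - e := by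
    rw [h_one_sub]
    refine cfc_nonneg fun x hx => ?_
    rcases hcases x hx with ⟨_, _, h⟩ | ⟨_, h⟩ <;> simp [h]
  have h_le : (1 : H →L[ℂ] H) - e ≤ δ⁻¹ • (1 - Tlim) := by
    have hr : δ⁻¹ • ((1 : H →L[ℂ] H) - Tlim) = cfc (fun x : ℝ => δ⁻¹ * (1 - x)) Tlim := by
      rw [cfc_const_mul δ⁻¹ (fun x : ℝ => 1 - x) Tlim (by fun_prop),
        cfc_sub (fun _ : ℝ => (1:ℝ)) (fun x : ℝ => x) Tlim continuous_const.continuousOn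
          (by fun_prop), cfc_const (1:ℝ) Tlim, map_one, cfc_id' ℝ Tlim]
    rw [h_one_sub, hr]
    refine cfc_mono (fun x hx => ?_) (by fun_prop) (by fun_prop)
    rcases hcases x hx with ⟨h0, h1, h⟩ | ⟨h1, h⟩
    · rw [h, sub_zero, le_inv_mul_iff₀ hδ, mul_one]
      linarith
    · subst h1
      rw [h, sub_self, mul_zero]
  -- fixed vectors are fixed by e
  have h_e_fix : ∀ ξ : H, Tlim ξ = ξ → e ξ = ξ := by
    intro ξ hξ
    have hz : ((1 : H →L[ℂ] H) - e) ξ = 0 := by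
      apply apply_eq_zero_of_inner_zero' _ h_one_sub_nonneg
      have hub := (ContinuousLinearMap.le_def _ _ |>.mp h_le).inner_nonneg_left ξ
      have hrhs : (δ⁻¹ • ((1 : H →L[ℂ] H) - Tlim)) ξ = 0 := by
        simp [ContinuousLinearMap.smul_apply, ContinuousLinearMap.sub_apply, hξ]
      have hlb := (ContinuousLinearMap.nonneg_iff_isPositive _ |>.mp
        h_one_sub_nonneg).inner_nonneg_left ξ
      rw [ContinuousLinearMap.sub_apply, hrhs, zero_sub, inner_neg_left] at hub
      rw [le_antisymm (neg_nonneg.mp hub) hlb, map_zero]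
    have := sub_eq_zero.mp (by simpa [ContinuousLinearMap.sub_apply] using hz)
    simpa using this.symm
  have heP : e * P = P := by
    ext ξ
    exact h_e_fix (P ξ) (hPmem ξ)
  have hPe : P * e = e := by
    ext ξ
    refine hPfix (e ξ) ?_
    have := congrArg (fun S : H →L[ℂ] H => S ξ) h_Te
    simpa using this
  have heqP : e = P := by
    have hstar := congrArg star hPe
    rw [star_mul, h_e_sa.star_eq, hPsa.star_eq, heP] at hstar
    exact hstar.symm.trans rfl
  rw [← heqP, hedef]
  have hTlim_eq : Tlim - cfc f Tlim = cfc (fun x : ℝ => x - f x) Tlim := by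
    rw [cfc_sub (fun x : ℝ => x) f Tlim (by fun_prop) hfc.continuousOn, cfc_id' ℝ Tlim]
  rw [hTlim_eq]
  refine norm_cfc_le (by linarith) fun x hx => ?_
  rcases hcases x hx with ⟨h0, h1, h⟩ | ⟨h1, h⟩
  · rw [h, sub_zero, Real.norm_eq_abs, abs_of_nonneg h0]; exact h1
  · subst h1
    rw [h]
    simp
    linarith

end Aux

/-- `prodSeq T σ n = T (σ n) ∘ ⋯ ∘ T (σ 0)`. -/
noncomputable def prodSeq {H : Type*} [NormedAddCommGroup H] [InnerProductSpace ℂ H]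
    (T : ℕ → H →L[ℂ] H) (σ : ℕ → ℕ) : ℕ → H →L[ℂ] H
  | 0 => T (σ 0)
  | (n + 1) => (T (σ (n + 1))).comp (prodSeq T σ n)

/-- If `‖T n - Tlim‖ → 0` and `1` is isolated in the spectrum of `Tlim`, then
`‖S_n^σ - P‖ → 0` in operator norm for every proper `σ`. -/
theorem generalized_paszkiewicz_norm_convergence
    {H : Type*} [NormedAddCommGroup H] [InnerProductSpace ℂ H] [CompleteSpace H]
    (T : ℕ → H →L[ℂ] H)
    (hpos : ∀ n, ∀ ξ : H, 0 ≤ ⟪(T n) ξ, ξ⟫_ℂ)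
    (hcontr : ∀ n, ‖T n‖ ≤ 1)
    (hdec : ∀ n, ∀ ξ : H, ⟪(T (n + 1)) ξ, ξ⟫_ℂ ≤ ⟪(T n) ξ, ξ⟫_ℂ)
    (Tlim : H →L[ℂ] H)
    (hTlim : ∀ ξ : H, Tendsto (fun n => (T n) ξ) atTop (𝓝 (Tlim ξ)))
    (P : H →L[ℂ] H)
    (hPmem : ∀ ξ : H, Tlim (P ξ) = P ξ)
    (hPorth : ∀ ξ η : H, Tlim η = η → ⟪ξ - P ξ, η⟫_ℂ = 0)
    (hnorm : Tendsto (fun n => ‖T n - Tlim‖) atTop (𝓝 0))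
    (hgap : ∃ δ ∈ Set.Ioo (0 : ℝ) 1,
      ∀ x : ℝ, x ∈ Set.Ioo (1 - δ) 1 → (x : ℂ) ∉ spectrum ℂ Tlim) :
    ∀ σ : ℕ → ℕ, (∀ k, (σ ⁻¹' {k}).Finite) →
      Tendsto (fun n => ‖prodSeq T σ n - P‖) atTop (𝓝 0) := by
  intro σ hσ
  rcases subsingleton_or_nontrivial H with hsub | hnt
  · have hz : (fun n => ‖prodSeq T σ n - P‖) = fun _ => 0 := by
      funext n
      have : prodSeq T σ n - P = 0 := by ext ξ; exact Subsingleton.elim _ _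
      simp [this]
    rw [hz]
    exact tendsto_const_nhds
  obtain ⟨δ, ⟨hδ0, hδ1⟩, hgap⟩ := hgap
  -- basic positivity facts
  have hTn0 : ∀ n, (0 : H →L[ℂ] H) ≤ T n := fun n => pos_of_inner' _ (hpos n)
  have hupper : ∀ n (ξ : H), RCLike.re ⟪(T n) ξ, ξ⟫_ℂ ≤ ‖ξ‖ ^ 2 := by
    intro n ξ
    calc RCLike.re ⟪(T n) ξ, ξ⟫_ℂ ≤ ‖⟪(T n) ξ, ξ⟫_ℂ‖ := RCLike.re_le_norm _
    _ ≤ ‖(T n) ξ‖ * ‖ξ‖ := norm_inner_le_norm _ _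
    _ ≤ (‖T n‖ * ‖ξ‖) * ‖ξ‖ := by
        gcongr
        exact (T n).le_opNorm ξ
    _ ≤ (1 * ‖ξ‖) * ‖ξ‖ := by gcongr; exact hcontr n
    _ = ‖ξ‖ ^ 2 := by ring
  have hone_sub : ∀ n, (0 : H →L[ℂ] H) ≤ 1 - T n := by
    intro n
    refine pos_of_inner' _ fun ξ => ?_
    have h1 := (Complex.le_def).mp (hpos n ξ)
    rw [Complex.le_def]
    constructor
    · simp only [Complex.zero_re, ContinuousLinearMap.sub_apply, inner_sub_left,
        ContinuousLinearMap.one_apply, Complex.sub_re]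
      have h2 := hupper n ξ
      have h3 : (⟪ξ, ξ⟫_ℂ).re = ‖ξ‖ ^ 2 := inner_self_eq_norm_sq (𝕜 := ℂ) ξ
      have h4 : RCLike.re ⟪(T n) ξ, ξ⟫_ℂ = (⟪(T n) ξ, ξ⟫_ℂ).re := rfl
      rw [h3]
      rw [h4] at h2
      linarith [h2]
    · simp only [Complex.zero_im, ContinuousLinearMap.sub_apply, inner_sub_left,
        ContinuousLinearMap.one_apply, Complex.sub_im]
      have h3 : (⟪ξ, ξ⟫_ℂ).im = 0 := by
        rw [inner_self_eq_norm_sq_to_K (𝕜 := ℂ)]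
        simp [pow_two, Complex.mul_im]
      rw [h3, ← h1.2]
      simp
  -- fixed vectors of Tlim are fixed by every T n
  have hfixn : ∀ (ξ : H), Tlim ξ = ξ → ∀ n, T n ξ = ξ := by
    intro ξ hξ n
    have hmono : Antitone fun k => RCLike.re ⟪(T k) ξ, ξ⟫_ℂ := by
      refine antitone_nat_of_succ_le fun k => ?_
      exact ((Complex.le_def).mp (hdec k ξ)).1
    have hconv : Tendsto (fun k => ⟪(T k) ξ, ξ⟫_ℂ) atTop (𝓝 ⟪Tlim ξ, ξ⟫_ℂ) :=
      (hTlim ξ).inner tendsto_const_nhds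
    have hconv_re : Tendsto (fun k => RCLike.re ⟪(T k) ξ, ξ⟫_ℂ) atTop
        (𝓝 (RCLike.re ⟪Tlim ξ, ξ⟫_ℂ)) := (Complex.continuous_re.tendsto _).comp hconv
    have hge : RCLike.re ⟪Tlim ξ, ξ⟫_ℂ ≤ RCLike.re ⟪(T n) ξ, ξ⟫_ℂ :=
      hmono.le_of_tendsto hconv_re n
    have hself : RCLike.re ⟪Tlim ξ, ξ⟫_ℂ = ‖ξ‖ ^ 2 := by
      rw [hξ]; exact inner_self_eq_norm_sq ξ
    have heq : RCLike.re ⟪(T n) ξ, ξ⟫_ℂ = ‖ξ‖ ^ 2 :=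
      le_antisymm (hupper n ξ) (hself ▸ hge)
    have hz : ((1 : H →L[ℂ] H) - T n) ξ = 0 := by
      refine apply_eq_zero_of_inner_zero' _ (hone_sub n) ξ ?_
      have : ⟪((1 : H →L[ℂ] H) - T n) ξ, ξ⟫_ℂ = ⟪ξ, ξ⟫_ℂ - ⟪(T n) ξ, ξ⟫_ℂ := by
        simp [ContinuousLinearMap.sub_apply, inner_sub_left]
      rw [this, map_sub]
      have h3 : RCLike.re ⟪ξ, ξ⟫_ℂ = ‖ξ‖ ^ 2 := inner_self_eq_norm_sq ξ
      rw [h3, heq, sub_self]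
    have := sub_eq_zero.mp (by simpa [ContinuousLinearMap.sub_apply] using hz)
    simpa using this.symm
  -- P is the orthogonal projection
  have hPfix : ∀ η : H, Tlim η = η → P η = η := by
    intro η hη
    have h1 : ⟪η - P η, η⟫_ℂ = 0 := hPorth η η hη
    have h2 : ⟪η - P η, P η⟫_ℂ = 0 := hPorth η (P η) (hPmem η)
    have h3 : ⟪η - P η, η - P η⟫_ℂ = 0 := by
      rw [inner_sub_right, h1, h2, sub_self]
    have := inner_self_eq_zero.mp h3
    rw [sub_eq_zero] at this
    exact this.symm
  have hPsa : IsSelfAdjoint P := by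
    rw [ContinuousLinearMap.isSelfAdjoint_iff_isSymmetric]
    intro x y
    have h1 : ⟪P x, y - P y⟫_ℂ = 0 := by
      rw [← inner_conj_symm]
      rw [hPorth y (P x) (hPmem x)]
      simp
    have h2 : ⟪x - P x, P y⟫_ℂ = 0 := hPorth x (P y) (hPmem y)
    have e1 : ⟪P x, y⟫_ℂ = ⟪P x, P y⟫_ℂ := by
      have := inner_sub_right (𝕜 := ℂ) (P x) y (P y)
      rw [h1] at this
      exact sub_eq_zero.mp this.symm
    have e2 : ⟪x, P y⟫_ℂ = ⟪P x, P y⟫_ℂ := by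
      have := inner_sub_left (𝕜 := ℂ) x (P x) (P y)
      rw [h2] at this
      exact sub_eq_zero.mp this.symm
    exact e1.trans e2.symm
  have hTP : ∀ n, T n * P = P := by
    intro n; ext ξ
    exact hfixn (P ξ) (hPmem ξ) n
  have hPT : ∀ n, P * T n = P := by
    intro n
    have := congrArg star (hTP n)
    rwa [star_mul, hPsa.star_eq, (IsSelfAdjoint.of_nonneg (hTn0 n)).star_eq] at this
  have hPP : P * P = P := by
    ext ξ
    exact hPfix (P ξ) (hPmem ξ)
  -- Tlim facts
  have hTlim0 : (0 : H →L[ℂ] H) ≤ Tlim := by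
    refine pos_of_inner' _ fun ξ => ?_
    have hconv : Tendsto (fun k => ⟪(T k) ξ, ξ⟫_ℂ) atTop (𝓝 ⟪Tlim ξ, ξ⟫_ℂ) :=
      (hTlim ξ).inner tendsto_const_nhds
    rw [Complex.le_def]
    constructor
    · have : Tendsto (fun k => (⟪(T k) ξ, ξ⟫_ℂ).re) atTop (𝓝 ((⟪Tlim ξ, ξ⟫_ℂ).re)) :=
        (Complex.continuous_re.tendsto _).comp hconv
      simp only [Complex.zero_re]
      exact ge_of_tendsto' this fun k => by simpa using ((Complex.le_def).mp (hpos k ξ)).1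
    · have : Tendsto (fun k => (⟪(T k) ξ, ξ⟫_ℂ).im) atTop (𝓝 ((⟪Tlim ξ, ξ⟫_ℂ).im)) :=
        (Complex.continuous_im.tendsto _).comp hconv
      simp only [Complex.zero_im]
      refine tendsto_nhds_unique (a := (0:ℝ)) ?_ this
      have heq : (fun k => (⟪(T k) ξ, ξ⟫_ℂ).im) = fun _ => (0:ℝ) := by
        funext k
        exact (((Complex.le_def).mp (hpos k ξ)).2).symm
      rw [heq]
      exact tendsto_const_nhds
  have hTlimsa : IsSelfAdjoint Tlim := IsSelfAdjoint.of_nonneg hTlim0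
  have hTlimnorm : ‖Tlim‖ ≤ 1 := by
    refine ContinuousLinearMap.opNorm_le_bound _ zero_le_one fun ξ => ?_
    rw [one_mul]
    refine le_of_tendsto ((hTlim ξ).norm) (Eventually.of_forall fun k => ?_)
    calc ‖(T k) ξ‖ ≤ ‖T k‖ * ‖ξ‖ := (T k).le_opNorm ξ
    _ ≤ 1 * ‖ξ‖ := by gcongr; exact hcontr k
    _ = ‖ξ‖ := one_mul _
  -- spectrum of Tlim
  have hspec : spectrum ℝ Tlim ⊆ Set.Icc 0 (1 - δ) ∪ {1} := by
    intro x hx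
    have hx' : (x : ℂ) ∈ spectrum ℂ Tlim := by
      have := spectrum.algebraMap_mem ℂ hx
      simpa using this
    have h0x : 0 ≤ x := spectrum_nonneg_of_nonneg hTlim0 hx
    have hx1 : x ≤ 1 := by
      have h1 : ‖(x : ℂ)‖ ≤ ‖Tlim‖ := spectrum.norm_le_norm_of_mem hx'
      have h2 : ‖(x : ℂ)‖ = |x| := Complex.norm_real x
      have := h1.trans hTlimnorm
      rw [h2] at this
      exact (le_abs_self x).trans this
    by_cases hle : x ≤ 1 - δ
    · exact Or.inl ⟨h0x, hle⟩
    · right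
      push_neg at hle
      rcases lt_or_eq_of_le hx1 with hlt | heq
      · exact absurd hx' (hgap x ⟨hle, hlt⟩)
      · simp [heq]
  have hTlimP : ‖Tlim - P‖ ≤ 1 - δ :=
    proj_eq Tlim P δ hδ0 hδ1 hTlimsa hspec hPfix hPmem hPsa
  -- product estimates
  have hPprod : ∀ n, P * prodSeq T σ n = P := by
    intro n
    induction n with
    | zero => exact hPT (σ 0)
    | succ n ih =>
      show P * (T (σ (n+1)) * prodSeq T σ n) = P
      rw [← mul_assoc, hPT, ih]
  have hprod_sub : ∀ n, prodSeq T σ (n+1) - P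
      = (T (σ (n+1)) - P) * (prodSeq T σ n - P) := by
    intro n
    have expand : (T (σ (n+1)) - P) * (prodSeq T σ n - P)
        = T (σ (n+1)) * prodSeq T σ n - T (σ (n+1)) * P - (P * prodSeq T σ n - P * P) := by
      rw [mul_sub, sub_mul, sub_mul]
      abel
    rw [expand, hTP, hPprod n, hPP, sub_self, sub_zero]
    rfl
  have hstep : ∀ n, ‖prodSeq T σ (n+1) - P‖
      ≤ ‖T (σ (n+1)) - P‖ * ‖prodSeq T σ n - P‖ := by
    intro n
    rw [hprod_sub n]
    exact norm_mul_le _ _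
  -- eventually all factors contract by c := 1 - δ/2
  set c : ℝ := 1 - δ / 2 with hc
  have hc0 : 0 ≤ c := by rw [hc]; linarith
  have hc1 : c < 1 := by rw [hc]; linarith
  obtain ⟨M, hM⟩ := Metric.tendsto_atTop.mp hnorm (δ / 2) (by linarith)
  have hQc : ∀ m, M ≤ m → ‖T m - P‖ ≤ c := by
    intro m hm
    have h1 : ‖T m - Tlim‖ < δ / 2 := by
      have := hM m hm
      rwa [Real.dist_eq, sub_zero, abs_of_nonneg (norm_nonneg _)] at this
    calc ‖T m - P‖ = ‖(T m - Tlim) + (Tlim - P)‖ := by rw [sub_add_sub_cancel]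
    _ ≤ ‖T m - Tlim‖ + ‖Tlim - P‖ := norm_add_le _ _
    _ ≤ δ / 2 + (1 - δ) := by gcongr -- strict + le
    _ = c := by rw [hc]; ring
  -- finiteness of bad indices
  have hfin : Set.Finite {k | σ k < M} := by
    refine Set.Finite.subset (Set.Finite.biUnion (Set.finite_Iio M)
      (fun i _ => hσ i)) ?_
    intro k hk
    exact Set.mem_biUnion hk rfl
  obtain ⟨b, hb⟩ := hfin.bddAbove
  set N : ℕ := b + 1 with hN
  have hgood : ∀ k, N ≤ k → M ≤ σ k := by
    intro k hk
    by_contra hcon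
    push_neg at hcon
    have := hb (Set.mem_setOf.mpr hcon)
    omega
  set C : ℝ := ‖prodSeq T σ N - P‖ with hC
  have key : ∀ j, ‖prodSeq T σ (N + j) - P‖ ≤ C * c ^ j := by
    intro j
    induction j with
    | zero => simp [hC]
    | succ j ih =>
      have h1 : N + (j + 1) = (N + j) + 1 := by omega
      rw [h1]
      calc ‖prodSeq T σ ((N + j) + 1) - P‖
          ≤ ‖T (σ ((N + j) + 1)) - P‖ * ‖prodSeq T σ (N + j) - P‖ := hstep _
      _ ≤ c * (C * c ^ j) := by
          refine mul_le_mul (hQc _ (hgood _ (by omega))) ih (norm_nonneg _) hc0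
      _ = C * c ^ (j + 1) := by ring
  -- conclude
  have hgt : Tendsto (fun n : ℕ => C * c ^ (n - N)) atTop (𝓝 0) := by
    have h1 : Tendsto (fun j : ℕ => c ^ j) atTop (𝓝 0) :=
      tendsto_pow_atTop_nhds_zero_of_lt_one hc0 hc1
    have h2 : Tendsto (fun n : ℕ => c ^ (n - N)) atTop (𝓝 0) :=
      h1.comp (tendsto_sub_atTop_nat N)
    simpa using h2.const_mul C
  refine squeeze_zero' (Eventually.of_forall fun n => norm_nonneg _) ?_ hgt
  filter_upwards [eventually_ge_atTop N] with n hn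
  have := key (n - N)
  rwa [Nat.add_sub_cancel' hn] at this
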